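/- In the FedAvg setup, fix a round t, a client k, and a neuron h, and write ΔW^h_{t,k} = W^h_{t,k,n} − W^h_{t−1} and Δb^h_{t,k} = b^h_{t,k,n} − b^h_{t−1} for the client-level round update of neuron h. Then there exist real coefficients λ_{i,x}, one for each local update i ∈ {0,…,n−1} and each sample x ∈ A^h(θ_{t,k,i}, B_{t,k,i}), with each λ_{i,x} ≠ 0 — explicitly λ_{i,x} = −η · ∂_h F_{φ_{t,k,i}, y}(ReLU(W_{t,k,i} x + b_{t,k,i})), where y is the label paired with x in B_{t,k,i} — such that ΔW^h_{t,k} = Σ_{i} Σ_{x ∈ A^h(θ_{t,k,i},B_{t,k,i})} λ_{i,x} · x and Δb^h_{t,k} = Σ_{i} Σ_{x ∈ A^h(θ_{t,k,i},B_{t,k,i})} λ_{i,x}. In particular, the client's per-neuron update is a linear combination of samples in the client-level activation set A^h_{t,k} = ∪_{i=0}^{n−1} A^h(θ_{t,k,i}, B_{t,k,i}). -/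

import Mathlib

noncomputable section

/-- Pre-activation `W^h · x + b^h` of neuron `h` on sample `x`. -/
def preact {d H : ℕ} (W : Fin H → Fin d → ℝ) (b : Fin H → ℝ) (x : Fin d → ℝ)
    (h : Fin H) : ℝ :=
  (∑ j, W h j * x j) + b h

/-- Componentwise ReLU output of the first layer. -/
def reluVec {d H : ℕ} (W : Fin H → Fin d → ℝ) (b : Fin H → ℝ) (x : Fin d → ℝ) :
    Fin H → ℝ :=
  fun h => max (preact W b x h) 0

/-- `F_{φ,y}(z) = ℓ(f(φ, z), y)`. -/
def Floss {H r C : ℕ} {Y : Type*} (f : (Fin r → ℝ) → (Fin H → ℝ) → Fin C → ℝ)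
    (l : (Fin C → ℝ) → Y → ℝ) (φ : Fin r → ℝ) (y : Y) (z : Fin H → ℝ) : ℝ :=
  l (f φ z) y

/-- Partial derivative of `F : ℝ^H → ℝ` in the `h`-th coordinate at `z`. -/
def dFh {H : ℕ} (F : (Fin H → ℝ) → ℝ) (z : Fin H → ℝ) (h : Fin H) : ℝ :=
  fderiv ℝ F z (Pi.single h 1)

/-- The loss of the model `θ = (W, b, φ)` on the batch `B`:
`L(θ; B) = ∑_{(x,y) ∈ B} ℓ(f(φ, ReLU(W x + b)), y)`. -/
def batchLoss {d H r C : ℕ} {Y : Type*} (f : (Fin r → ℝ) → (Fin H → ℝ) → Fin C → ℝ)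
    (l : (Fin C → ℝ) → Y → ℝ)
    (θ : (Fin H → Fin d → ℝ) × (Fin H → ℝ) × (Fin r → ℝ))
    (B : Finset ((Fin d → ℝ) × Y)) : ℝ :=
  ∑ p ∈ B, Floss f l θ.2.2 p.2 (reluVec θ.1 θ.2.1 p.1)

open Classical in
/-- Batch-level activation set `A^h(θ, B)` of neuron `h`, as a finset of
sample/label pairs of the batch. -/
def activB {d H r C : ℕ} {Y : Type*} (f : (Fin r → ℝ) → (Fin H → ℝ) → Fin C → ℝ)
    (l : (Fin C → ℝ) → Y → ℝ)
    (θ : (Fin H → Fin d → ℝ) × (Fin H → ℝ) × (Fin r → ℝ))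
    (B : Finset ((Fin d → ℝ) × Y)) (h : Fin H) : Finset ((Fin d → ℝ) × Y) :=
  B.filter (fun p => 0 < preact θ.1 θ.2.1 p.1 h ∧
    dFh (Floss f l θ.2.2 p.2) (reluVec θ.1 θ.2.1 p.1) h ≠ 0)

/-- The gradient of a function on the parameter space, assembled coordinatewise
from directional derivatives. -/
def gradP {d H r : ℕ} (L : ((Fin H → Fin d → ℝ) × (Fin H → ℝ) × (Fin r → ℝ)) → ℝ)
    (θ : (Fin H → Fin d → ℝ) × (Fin H → ℝ) × (Fin r → ℝ)) :
    (Fin H → Fin d → ℝ) × (Fin H → ℝ) × (Fin r → ℝ) :=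
  (fun h j => fderiv ℝ L θ (Pi.single h (Pi.single j 1), 0, 0),
   fun h => fderiv ℝ L θ (0, Pi.single h 1, 0),
   fun s => fderiv ℝ L θ (0, 0, Pi.single s 1))

/-- Round-level activation set `A^h_t` of neuron `h`: the set of samples activating
neuron `h` at some local update of some client during the round. -/
def roundActiv {d H r C K : ℕ} {Y : Type*} (f : (Fin r → ℝ) → (Fin H → ℝ) → Fin C → ℝ)
    (l : (Fin C → ℝ) → Y → ℝ) (n : ℕ)
    (θ : Fin K → ℕ → ((Fin H → Fin d → ℝ) × (Fin H → ℝ) × (Fin r → ℝ)))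
    (Bt : Fin K → ℕ → Finset ((Fin d → ℝ) × Y)) (h : Fin H) : Set (Fin d → ℝ) :=
  {x | ∃ k, ∃ i < n, ∃ y, (x, y) ∈ activB f l (θ k i) (Bt k i) h}

/-- The explicit coefficient `λ_{i,x} = -η ∂_h F_{φ_{t,k,i},y}(ReLU(W_{t,k,i} x + b_{t,k,i}))`
attached to the occurrence of the sample/label pair `p` at local update `i` of the client. -/
def lamI {d H r C : ℕ} {Y : Type*} (f : (Fin r → ℝ) → (Fin H → ℝ) → Fin C → ℝ)
    (l : (Fin C → ℝ) → Y → ℝ) (η : ℝ)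
    (θ : (Fin H → Fin d → ℝ) × (Fin H → ℝ) × (Fin r → ℝ))
    (h : Fin H) (p : (Fin d → ℝ) × Y) : ℝ :=
  -η * dFh (Floss f l θ.2.2 p.2) (reluVec θ.1 θ.2.1 p.1) h

abbrev PSp (d H r : ℕ) := (Fin H → Fin d → ℝ) × (Fin H → ℝ) × (Fin r → ℝ)

/-- `preact` as a continuous linear map in the parameters. -/
def preactCLM (d H r : ℕ) (x : Fin d → ℝ) (h' : Fin H) : PSp d H r →L[ℝ] ℝ :=
  (∑ j, x j • ((ContinuousLinearMap.proj j).comp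
      ((ContinuousLinearMap.proj h').comp
        (ContinuousLinearMap.fst ℝ (Fin H → Fin d → ℝ) ((Fin H → ℝ) × (Fin r → ℝ))))))
  + (ContinuousLinearMap.proj h').comp
      ((ContinuousLinearMap.fst ℝ (Fin H → ℝ) (Fin r → ℝ)).comp
        (ContinuousLinearMap.snd ℝ (Fin H → Fin d → ℝ) ((Fin H → ℝ) × (Fin r → ℝ))))

lemma preactCLM_apply {d H r : ℕ} (x : Fin d → ℝ) (h' : Fin H) (θ : PSp d H r) :
    preactCLM d H r x h' θ = preact θ.1 θ.2.1 x h' := by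
  simp [preactCLM, preact, mul_comm]

lemma hasFDerivAt_preact {d H r : ℕ} (x : Fin d → ℝ) (h' : Fin H) (θ : PSp d H r) :
    HasFDerivAt (fun ψ : PSp d H r => preact ψ.1 ψ.2.1 x h') (preactCLM d H r x h') θ := by
  have : (fun ψ : PSp d H r => preact ψ.1 ψ.2.1 x h') = ⇑(preactCLM d H r x h') :=
    funext fun ψ => (preactCLM_apply x h' ψ).symm
  rw [this]
  exact (preactCLM d H r x h').hasFDerivAt

/-- Derivative of the `h'`-th coordinate of the relu layer. -/
def Dcoord {d H r : ℕ} (x : Fin d → ℝ) (θ : PSp d H r) (h' : Fin H) : PSp d H r →L[ℝ] ℝ :=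
  if 0 < preact θ.1 θ.2.1 x h' then preactCLM d H r x h' else 0

lemma hasFDerivAt_reluCoord {d H r : ℕ} (x : Fin d → ℝ) (h' : Fin H) (θ : PSp d H r)
    (hx : preact θ.1 θ.2.1 x h' ≠ 0) :
    HasFDerivAt (fun ψ : PSp d H r => reluVec ψ.1 ψ.2.1 x h') (Dcoord x θ h') θ := by
  have hcont : Continuous fun ψ : PSp d H r => preact ψ.1 ψ.2.1 x h' := by
    have : (fun ψ : PSp d H r => preact ψ.1 ψ.2.1 x h') = ⇑(preactCLM d H r x h') :=
      funext fun ψ => (preactCLM_apply x h' ψ).symm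
    rw [this]; exact (preactCLM d H r x h').continuous
  rcases hx.lt_or_gt with hneg | hpos
  · have hev : (fun ψ : PSp d H r => reluVec ψ.1 ψ.2.1 x h') =ᶠ[nhds θ] fun _ => (0 : ℝ) := by
      have hU : IsOpen {ψ : PSp d H r | preact ψ.1 ψ.2.1 x h' < 0} :=
        isOpen_lt hcont continuous_const
      filter_upwards [hU.mem_nhds hneg] with ψ hψ
      simp only [reluVec]
      exact max_eq_right (le_of_lt hψ)
    have h0 : HasFDerivAt (fun _ : PSp d H r => (0 : ℝ)) (0 : PSp d H r →L[ℝ] ℝ) θ :=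
      hasFDerivAt_const 0 θ
    have := h0.congr_of_eventuallyEq hev
    rwa [Dcoord, if_neg (not_lt_of_gt hneg)]
  · have hev : (fun ψ : PSp d H r => reluVec ψ.1 ψ.2.1 x h')
        =ᶠ[nhds θ] fun ψ => preact ψ.1 ψ.2.1 x h' := by
      have hU : IsOpen {ψ : PSp d H r | 0 < preact ψ.1 ψ.2.1 x h'} :=
        isOpen_lt continuous_const hcont
      filter_upwards [hU.mem_nhds hpos] with ψ hψ
      simp only [reluVec]
      exact max_eq_left (le_of_lt hψ)
    have := (hasFDerivAt_preact x h' θ).congr_of_eventuallyEq hev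
    rwa [Dcoord, if_pos hpos]

/-- Derivative of the relu layer as a map into `ℝ^H`. -/
def DreluCLM {d H r : ℕ} (x : Fin d → ℝ) (θ : PSp d H r) : PSp d H r →L[ℝ] (Fin H → ℝ) :=
  ContinuousLinearMap.pi (fun h' => Dcoord x θ h')

lemma hasFDerivAt_reluVec {d H r : ℕ} (x : Fin d → ℝ) (θ : PSp d H r)
    (hx : ∀ h', preact θ.1 θ.2.1 x h' ≠ 0) :
    HasFDerivAt (fun ψ : PSp d H r => reluVec ψ.1 ψ.2.1 x) (DreluCLM x θ) θ :=
  hasFDerivAt_pi.2 fun h' => hasFDerivAt_reluCoord x h' θ (hx h')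

section Sample

variable {d H r C : ℕ} {Y : Type*}
  (f : (Fin r → ℝ) → (Fin H → ℝ) → Fin C → ℝ)
  (l : (Fin C → ℝ) → Y → ℝ)

/-- outer map -/
def outerM (y : Y) : (Fin r → ℝ) × (Fin H → ℝ) → ℝ := fun q => l (f q.1 q.2) y

lemma outer_diff (hf : Differentiable ℝ (fun q : (Fin r → ℝ) × (Fin H → ℝ) => f q.1 q.2))
    (hl : ∀ y, Differentiable ℝ (fun u => l u y)) (y : Y) :
    Differentiable ℝ (outerM f l y) := (hl y).comp hf

/-- `dFh` of `Floss` in terms of the fderiv of the outer map. -/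
lemma dFh_Floss (hf : Differentiable ℝ (fun q : (Fin r → ℝ) × (Fin H → ℝ) => f q.1 q.2))
    (hl : ∀ y, Differentiable ℝ (fun u => l u y)) (y : Y) (φ : Fin r → ℝ)
    (z : Fin H → ℝ) (h : Fin H) :
    dFh (Floss f l φ y) z h = fderiv ℝ (outerM f l y) (φ, z) (0, Pi.single h 1) := by
  have h1 : HasFDerivAt (fun z' : Fin H → ℝ => ((φ, z') : (Fin r → ℝ) × (Fin H → ℝ)))
      ((0 : (Fin H → ℝ) →L[ℝ] (Fin r → ℝ)).prod (ContinuousLinearMap.id ℝ (Fin H → ℝ))) z :=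
    (hasFDerivAt_const φ z).prodMk (hasFDerivAt_id z)
  have h2 : HasFDerivAt (Floss f l φ y)
      ((fderiv ℝ (outerM f l y) (φ, z)).comp
        ((0 : (Fin H → ℝ) →L[ℝ] (Fin r → ℝ)).prod (ContinuousLinearMap.id ℝ (Fin H → ℝ)))) z :=
    ((outer_diff f l hf hl y (φ, z)).hasFDerivAt).comp z h1
  rw [dFh, h2.fderiv]
  rfl

/-- derivative of the per-sample loss in the parameters -/
lemma hasFDerivAt_sample (hf : Differentiable ℝ (fun q : (Fin r → ℝ) × (Fin H → ℝ) => f q.1 q.2))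
    (hl : ∀ y, Differentiable ℝ (fun u => l u y)) (y : Y) (x : Fin d → ℝ) (θ : PSp d H r)
    (hx : ∀ h', preact θ.1 θ.2.1 x h' ≠ 0) :
    HasFDerivAt (fun ψ : PSp d H r => Floss f l ψ.2.2 y (reluVec ψ.1 ψ.2.1 x))
      ((fderiv ℝ (outerM f l y) (θ.2.2, reluVec θ.1 θ.2.1 x)).comp
        (((ContinuousLinearMap.snd ℝ (Fin H → ℝ) (Fin r → ℝ)).comp
            (ContinuousLinearMap.snd ℝ (Fin H → Fin d → ℝ) ((Fin H → ℝ) × (Fin r → ℝ)))).prod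
          (DreluCLM x θ))) θ := by
  have hinner : HasFDerivAt
      (fun ψ : PSp d H r => ((ψ.2.2, reluVec ψ.1 ψ.2.1 x) : (Fin r → ℝ) × (Fin H → ℝ)))
      (((ContinuousLinearMap.snd ℝ (Fin H → ℝ) (Fin r → ℝ)).comp
          (ContinuousLinearMap.snd ℝ (Fin H → Fin d → ℝ) ((Fin H → ℝ) × (Fin r → ℝ)))).prod
        (DreluCLM x θ)) θ := by
    refine HasFDerivAt.prodMk ?_ (hasFDerivAt_reluVec x θ hx)
    exact ((ContinuousLinearMap.snd ℝ (Fin H → ℝ) (Fin r → ℝ)).comp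
      (ContinuousLinearMap.snd ℝ (Fin H → Fin d → ℝ) ((Fin H → ℝ) × (Fin r → ℝ)))).hasFDerivAt
  exact ((outer_diff f l hf hl y _).hasFDerivAt).comp θ hinner

end Sample

section Eval

variable {d H r C : ℕ} {Y : Type*}
  (f : (Fin r → ℝ) → (Fin H → ℝ) → Fin C → ℝ)
  (l : (Fin C → ℝ) → Y → ℝ)

lemma preactCLM_single_W (x : Fin d → ℝ) (h' h : Fin H) (j : Fin d) :
    preactCLM d H r x h' ((Pi.single h (Pi.single j 1) : Fin H → Fin d → ℝ),
        (0 : (Fin H → ℝ) × (Fin r → ℝ)))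
      = if h' = h then x j else 0 := by
  rw [preactCLM_apply]
  simp only [preact, Pi.single_apply]
  by_cases hh : h' = h
  · simp [hh, Pi.single_apply, ite_mul, mul_ite, one_mul, mul_one, zero_mul, mul_zero,
      Finset.sum_ite_eq']
  · simp [hh]

lemma preactCLM_single_b (x : Fin d → ℝ) (h' h : Fin H) :
    preactCLM d H r x h' ((0 : Fin H → Fin d → ℝ), ((Pi.single h 1 : Fin H → ℝ),
        (0 : Fin r → ℝ)))
      = if h' = h then 1 else 0 := by
  rw [preactCLM_apply]
  simp [preact, Pi.single_apply]

lemma Drelu_single_W (x : Fin d → ℝ) (θ : PSp d H r) (h : Fin H) (j : Fin d) :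
    (DreluCLM x θ) ((Pi.single h (Pi.single j 1) : Fin H → Fin d → ℝ), 0, 0)
      = if 0 < preact θ.1 θ.2.1 x h then x j • (Pi.single h (1 : ℝ) : Fin H → ℝ)
        else (0 : Fin H → ℝ) := by
  funext h'
  simp only [DreluCLM, ContinuousLinearMap.pi_apply, Dcoord]
  by_cases hh : h' = h
  · subst hh
    by_cases hp : 0 < preact θ.1 θ.2.1 x h'
    · simp [hp, preactCLM_single_W, Pi.single_apply]
      exact (preactCLM_single_W x h' h' j).trans (if_pos rfl)
    · simp [hp]
  · by_cases hp : 0 < preact θ.1 θ.2.1 x h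
    · by_cases hp' : 0 < preact θ.1 θ.2.1 x h'
      · simp [hp, hp', preactCLM_single_W, hh, Pi.single_apply]
        exact (preactCLM_single_W x h' h j).trans (if_neg hh)
      · simp [hp, hp', Pi.single_apply, hh]
    · by_cases hp' : 0 < preact θ.1 θ.2.1 x h'
      · simp [hp, hp', preactCLM_single_W, hh]
        exact (preactCLM_single_W x h' h j).trans (if_neg hh)
      · simp [hp, hp']

lemma Drelu_single_b (x : Fin d → ℝ) (θ : PSp d H r) (h : Fin H) :
    (DreluCLM x θ) ((0 : Fin H → Fin d → ℝ), (Pi.single h 1 : Fin H → ℝ), 0)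
      = if 0 < preact θ.1 θ.2.1 x h then (Pi.single h (1 : ℝ) : Fin H → ℝ)
        else (0 : Fin H → ℝ) := by
  funext h'
  simp only [DreluCLM, ContinuousLinearMap.pi_apply, Dcoord]
  by_cases hh : h' = h
  · subst hh
    by_cases hp : 0 < preact θ.1 θ.2.1 x h'
    · simp [hp, preactCLM_single_b, Pi.single_apply]
    · simp [hp]
  · by_cases hp : 0 < preact θ.1 θ.2.1 x h
    · by_cases hp' : 0 < preact θ.1 θ.2.1 x h'
      · simp [hp, hp', preactCLM_single_b, hh, Pi.single_apply]
      · simp [hp, hp', Pi.single_apply, hh]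
    · by_cases hp' : 0 < preact θ.1 θ.2.1 x h'
      · simp [hp, hp', preactCLM_single_b, hh]
      · simp [hp, hp']

/-- The explicit derivative CLM of the per-sample loss. -/
def Dsample (y : Y) (x : Fin d → ℝ) (θ : PSp d H r) : PSp d H r →L[ℝ] ℝ :=
  (fderiv ℝ (outerM f l y) (θ.2.2, reluVec θ.1 θ.2.1 x)).comp
    (((ContinuousLinearMap.snd ℝ (Fin H → ℝ) (Fin r → ℝ)).comp
        (ContinuousLinearMap.snd ℝ (Fin H → Fin d → ℝ) ((Fin H → ℝ) × (Fin r → ℝ)))).prod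
      (DreluCLM x θ))

lemma Dsample_W (hf : Differentiable ℝ (fun q : (Fin r → ℝ) × (Fin H → ℝ) => f q.1 q.2))
    (hl : ∀ y, Differentiable ℝ (fun u => l u y)) (y : Y) (x : Fin d → ℝ) (θ : PSp d H r)
    (h : Fin H) (j : Fin d) :
    Dsample f l y x θ ((Pi.single h (Pi.single j 1) : Fin H → Fin d → ℝ), 0, 0)
      = if 0 < preact θ.1 θ.2.1 x h
          then dFh (Floss f l θ.2.2 y) (reluVec θ.1 θ.2.1 x) h * x j else 0 := by
  set G := fderiv ℝ (outerM f l y) (θ.2.2, reluVec θ.1 θ.2.1 x) with hG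
  have key : Dsample f l y x θ ((Pi.single h (Pi.single j 1) : Fin H → Fin d → ℝ), 0, 0)
      = G ((0 : Fin r → ℝ),
          (DreluCLM x θ) ((Pi.single h (Pi.single j 1) : Fin H → Fin d → ℝ), 0, 0)) := rfl
  rw [key, Drelu_single_W]
  by_cases hp : 0 < preact θ.1 θ.2.1 x h
  · rw [if_pos hp, if_pos hp]
    have hsmul : (((0 : Fin r → ℝ), x j • (Pi.single h (1 : ℝ) : Fin H → ℝ)) :
          (Fin r → ℝ) × (Fin H → ℝ))
        = x j • (((0 : Fin r → ℝ), (Pi.single h (1 : ℝ) : Fin H → ℝ)) :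
          (Fin r → ℝ) × (Fin H → ℝ)) := by
      simp [Prod.smul_mk]
    rw [hsmul, G.map_smul, dFh_Floss f l hf hl, smul_eq_mul, mul_comm]
  · rw [if_neg hp, if_neg hp]
    have h0 : (((0 : Fin r → ℝ), (0 : Fin H → ℝ)) : (Fin r → ℝ) × (Fin H → ℝ)) = 0 := rfl
    rw [h0, G.map_zero]

lemma Dsample_b (hf : Differentiable ℝ (fun q : (Fin r → ℝ) × (Fin H → ℝ) => f q.1 q.2))
    (hl : ∀ y, Differentiable ℝ (fun u => l u y)) (y : Y) (x : Fin d → ℝ) (θ : PSp d H r)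
    (h : Fin H) :
    Dsample f l y x θ ((0 : Fin H → Fin d → ℝ), (Pi.single h 1 : Fin H → ℝ), 0)
      = if 0 < preact θ.1 θ.2.1 x h
          then dFh (Floss f l θ.2.2 y) (reluVec θ.1 θ.2.1 x) h else 0 := by
  set G := fderiv ℝ (outerM f l y) (θ.2.2, reluVec θ.1 θ.2.1 x) with hG
  have key : Dsample f l y x θ ((0 : Fin H → Fin d → ℝ), (Pi.single h 1 : Fin H → ℝ), 0)
      = G ((0 : Fin r → ℝ),
          (DreluCLM x θ) ((0 : Fin H → Fin d → ℝ), (Pi.single h 1 : Fin H → ℝ), 0)) := rfl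
  rw [key, Drelu_single_b]
  by_cases hp : 0 < preact θ.1 θ.2.1 x h
  · rw [if_pos hp, if_pos hp, dFh_Floss f l hf hl]
  · rw [if_neg hp, if_neg hp]
    have h0 : (((0 : Fin r → ℝ), (0 : Fin H → ℝ)) : (Fin r → ℝ) × (Fin H → ℝ)) = 0 := rfl
    rw [h0, G.map_zero]

lemma hasFDerivAt_sample' (hf : Differentiable ℝ (fun q : (Fin r → ℝ) × (Fin H → ℝ) => f q.1 q.2))
    (hl : ∀ y, Differentiable ℝ (fun u => l u y)) (y : Y) (x : Fin d → ℝ) (θ : PSp d H r)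
    (hx : ∀ h', preact θ.1 θ.2.1 x h' ≠ 0) :
    HasFDerivAt (fun ψ : PSp d H r => Floss f l ψ.2.2 y (reluVec ψ.1 ψ.2.1 x))
      (Dsample f l y x θ) θ :=
  hasFDerivAt_sample f l hf hl y x θ hx

end Eval

section Batch

variable {d H r C : ℕ} {Y : Type*}
  (f : (Fin r → ℝ) → (Fin H → ℝ) → Fin C → ℝ)
  (l : (Fin C → ℝ) → Y → ℝ)

lemma hasFDerivAt_batch (hf : Differentiable ℝ (fun q : (Fin r → ℝ) × (Fin H → ℝ) => f q.1 q.2))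
    (hl : ∀ y, Differentiable ℝ (fun u => l u y)) (B : Finset ((Fin d → ℝ) × Y))
    (θ : PSp d H r) (hnd : ∀ h' : Fin H, ∀ p ∈ B, preact θ.1 θ.2.1 p.1 h' ≠ 0) :
    HasFDerivAt (fun ψ : PSp d H r => batchLoss f l ψ B)
      (∑ p ∈ B, Dsample f l p.2 p.1 θ) θ := by
  have := HasFDerivAt.fun_sum (x := θ)
    (fun p (hp : p ∈ B) => hasFDerivAt_sample' f l hf hl p.2 p.1 θ (fun h' => hnd h' p hp))
  simpa [batchLoss] using this

lemma gradP_W (hf : Differentiable ℝ (fun q : (Fin r → ℝ) × (Fin H → ℝ) => f q.1 q.2))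
    (hl : ∀ y, Differentiable ℝ (fun u => l u y)) (B : Finset ((Fin d → ℝ) × Y))
    (θ : PSp d H r) (hnd : ∀ h' : Fin H, ∀ p ∈ B, preact θ.1 θ.2.1 p.1 h' ≠ 0)
    (h : Fin H) (j : Fin d) :
    (gradP (fun ψ => batchLoss f l ψ B) θ).1 h j
      = ∑ p ∈ activB f l θ B h,
          dFh (Floss f l θ.2.2 p.2) (reluVec θ.1 θ.2.1 p.1) h * p.1 j := by
  classical
  have hD := hasFDerivAt_batch f l hf hl B θ hnd
  show fderiv ℝ (fun ψ => batchLoss f l ψ B) θ (Pi.single h (Pi.single j 1), 0, 0) = _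
  rw [hD.fderiv, ContinuousLinearMap.sum_apply]
  have hterm : ∀ p ∈ B, Dsample f l p.2 p.1 θ (Pi.single h (Pi.single j 1), 0, 0)
      = if (0 < preact θ.1 θ.2.1 p.1 h ∧
            dFh (Floss f l θ.2.2 p.2) (reluVec θ.1 θ.2.1 p.1) h ≠ 0)
        then dFh (Floss f l θ.2.2 p.2) (reluVec θ.1 θ.2.1 p.1) h * p.1 j else 0 := by
    intro p _
    rw [Dsample_W f l hf hl]
    by_cases h1 : 0 < preact θ.1 θ.2.1 p.1 h
    · by_cases h2 : dFh (Floss f l θ.2.2 p.2) (reluVec θ.1 θ.2.1 p.1) h = 0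
      · simp [h1, h2]
      · simp [h1, h2]
    · simp [h1]
  rw [Finset.sum_congr rfl hterm]
  simp [activB, Finset.sum_filter]

lemma gradP_b (hf : Differentiable ℝ (fun q : (Fin r → ℝ) × (Fin H → ℝ) => f q.1 q.2))
    (hl : ∀ y, Differentiable ℝ (fun u => l u y)) (B : Finset ((Fin d → ℝ) × Y))
    (θ : PSp d H r) (hnd : ∀ h' : Fin H, ∀ p ∈ B, preact θ.1 θ.2.1 p.1 h' ≠ 0)
    (h : Fin H) :
    (gradP (fun ψ => batchLoss f l ψ B) θ).2.1 h
      = ∑ p ∈ activB f l θ B h,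
          dFh (Floss f l θ.2.2 p.2) (reluVec θ.1 θ.2.1 p.1) h := by
  classical
  have hD := hasFDerivAt_batch f l hf hl B θ hnd
  show fderiv ℝ (fun ψ => batchLoss f l ψ B) θ (0, Pi.single h 1, 0) = _
  rw [hD.fderiv, ContinuousLinearMap.sum_apply]
  have hterm : ∀ p ∈ B, Dsample f l p.2 p.1 θ (0, Pi.single h 1, 0)
      = if (0 < preact θ.1 θ.2.1 p.1 h ∧
            dFh (Floss f l θ.2.2 p.2) (reluVec θ.1 θ.2.1 p.1) h ≠ 0)
        then dFh (Floss f l θ.2.2 p.2) (reluVec θ.1 θ.2.1 p.1) h else 0 := by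
    intro p _
    rw [Dsample_b f l hf hl]
    by_cases h1 : 0 < preact θ.1 θ.2.1 p.1 h
    · by_cases h2 : dFh (Floss f l θ.2.2 p.2) (reluVec θ.1 θ.2.1 p.1) h = 0
      · simp [h1, h2]
      · simp [h1, h2]
    · simp [h1]
  rw [Finset.sum_congr rfl hterm]
  simp [activB, Finset.sum_filter]

end Batch


theorem stmt11 {d H r C : ℕ} {Y : Type*}
    (f : (Fin r → ℝ) → (Fin H → ℝ) → Fin C → ℝ)
    (l : (Fin C → ℝ) → Y → ℝ)
    (hf : Differentiable ℝ (fun q : (Fin r → ℝ) × (Fin H → ℝ) => f q.1 q.2))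
    (hl : ∀ y, Differentiable ℝ (fun u => l u y))
    (n : ℕ) (η : ℝ) (hη : 0 < η)
    (θprev : (Fin H → Fin d → ℝ) × (Fin H → ℝ) × (Fin r → ℝ))
    (Bt : ℕ → Finset ((Fin d → ℝ) × Y))
    (θ : ℕ → ((Fin H → Fin d → ℝ) × (Fin H → ℝ) × (Fin r → ℝ)))
    (hinj : ∀ i < n, ∀ p ∈ Bt i, ∀ q ∈ Bt i, p.1 = q.1 → p = q)
    (hinit : θ 0 = θprev)
    (hstep : ∀ i < n,
      θ (i + 1) = θ i - η • gradP (fun ψ => batchLoss f l ψ (Bt i)) (θ i))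
    (hnd : ∀ i < n, ∀ h' : Fin H, ∀ p ∈ Bt i, preact (θ i).1 (θ i).2.1 p.1 h' ≠ 0)
    (h : Fin H) :
    (∀ i < n, ∀ p ∈ activB f l (θ i) (Bt i) h, lamI f l η (θ i) h p ≠ 0) ∧
    (θ n).1 h - θprev.1 h
      = ∑ i ∈ Finset.range n, ∑ p ∈ activB f l (θ i) (Bt i) h, lamI f l η (θ i) h p • p.1 ∧
    (θ n).2.1 h - θprev.2.1 h
      = ∑ i ∈ Finset.range n, ∑ p ∈ activB f l (θ i) (Bt i) h, lamI f l η (θ i) h p := by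
  classical
  refine ⟨?_, ?_, ?_⟩
  · intro i _ p hp
    have hp' := Finset.mem_filter.1 hp
    exact mul_ne_zero (neg_ne_zero.2 hη.ne') hp'.2.2
  · -- W component
    have stepW : ∀ i < n, (θ (i + 1)).1 h - (θ i).1 h
        = ∑ p ∈ activB f l (θ i) (Bt i) h, lamI f l η (θ i) h p • p.1 := by
      intro i hi
      funext j
      have hc := congrArg (fun ψ : PSp d H r => ψ.1 h j) (hstep i hi)
      simp only [Prod.fst_sub, Prod.smul_fst, Pi.sub_apply, Pi.smul_apply,
        smul_eq_mul] at hc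
      rw [Pi.sub_apply, hc, gradP_W f l hf hl (Bt i) (θ i) (fun h' => hnd i hi h') h j]
      rw [Finset.sum_apply]
      simp only [Pi.smul_apply, smul_eq_mul, lamI]
      rw [Finset.mul_sum]
      rw [sub_sub_cancel_left, ← Finset.sum_neg_distrib]
      exact Finset.sum_congr rfl fun p _ => by ring
    rw [← hinit, ← Finset.sum_range_sub (fun i => (θ i).1 h) n]
    exact Finset.sum_congr rfl fun i hi => stepW i (Finset.mem_range.1 hi)
  · -- b component
    have stepb : ∀ i < n, (θ (i + 1)).2.1 h - (θ i).2.1 h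
        = ∑ p ∈ activB f l (θ i) (Bt i) h, lamI f l η (θ i) h p := by
      intro i hi
      have hc := congrArg (fun ψ : PSp d H r => ψ.2.1 h) (hstep i hi)
      simp only [Prod.snd_sub, Prod.fst_sub, Prod.smul_snd, Prod.smul_fst,
        Pi.sub_apply, Pi.smul_apply, smul_eq_mul] at hc
      rw [hc, gradP_b f l hf hl (Bt i) (θ i) (fun h' => hnd i hi h') h]
      simp only [lamI]
      rw [Finset.mul_sum, sub_sub_cancel_left, ← Finset.sum_neg_distrib]
      exact Finset.sum_congr rfl fun p _ => by ring
    rw [← hinit, ← Finset.sum_range_sub (fun i => (θ i).2.1 h) n]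
    exact Finset.sum_congr rfl fun i hi => stepb i (Finset.mem_range.1 hi)
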